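/- arXiv:1310.2031 — 4 statements merged into one kernel-verified Lean document; each statement's English description precedes it below -/
import Mathlib

section
/- Let α be a limit ordinal and X a set. Every contractive function F : URel_α(X) → URel_α(X) has a unique fixed point, i.e., there exists exactly one R ∈ URel_α(X) with F(R) = R. -/
/-!
Uniform subsets indexed by a limit ordinal `α`, and the unique fixed point
property of contractive functions on them.
-/

/-- An `α`-indexed uniform subset on `X`: a family `(R_β)_{β<α}` of subsets of
`X` such that `R₀ = X`, `R_{β+1} ⊆ R_β`, and `R_λ = ⋂_{β<λ} R_β` at limit
ordinals `λ < α`. -/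
structure URel (α : Ordinal.{u}) (X : Type v) where
  rel : ∀ β : Ordinal.{u}, β < α → Set X
  zero : ∀ h : (0 : Ordinal.{u}) < α, rel 0 h = Set.univ
  succ_subset : ∀ β (h : β < α) (h' : β + 1 < α), rel (β + 1) h' ⊆ rel β h
  limit_eq : ∀ β (h : β < α), Order.IsSuccLimit β →
    rel β h = ⋂ γ, ⋂ hγ : γ < β, rel γ (hγ.trans h)

/-- `R` and `S` are `ν`-equivalent: `R_β = S_β` for all `β ≤ ν`. -/
def URel.NEquiv {α : Ordinal.{u}} {X : Type v} (R S : URel α X) (ν : Ordinal.{u}) : Prop :=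
  ∀ β (hβ : β < α), β ≤ ν → R.rel β hβ = S.rel β hβ

/-- `F` is contractive: whenever `R` and `S` are `ν`-equivalent (`ν < α`),
`F R` and `F S` are `(ν+1)`-equivalent. -/
def Contractive {α : Ordinal.{u}} {X : Type v} (F : URel α X → URel α X) : Prop :=
  ∀ R S ν, ν < α → R.NEquiv S ν → (F R).NEquiv (F S) (ν + 1)

namespace URelAux

variable {α : Ordinal.{u}} {X : Type v}

theorem urel_ext {R S : URel α X} (h : R.rel = S.rel) : R = S := by
  cases R; cases S; cases h; rfl

theorem rel_anti (R : URel α X) :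
    ∀ γ (hγ : γ < α) β (hβγ : β ≤ γ), R.rel γ hγ ⊆ R.rel β (hβγ.trans_lt hγ) := by
  intro γ
  induction γ using Ordinal.induction with
  | _ γ ih =>
    intro hγ β hβγ
    rcases eq_or_lt_of_le hβγ with rfl | hlt
    · exact le_refl _
    rcases Ordinal.zero_or_succ_or_isSuccLimit γ with rfl | ⟨ν, rfl⟩ | hlim
    · exact absurd hlt (not_lt_zero (a := β))
    · rw [← Ordinal.add_one_eq_succ] at *
      have hν : ν < α := (lt_add_one ν).trans hγ
      have hβν : β ≤ ν := by
        have := Order.lt_succ_iff.mp (by rwa [Ordinal.add_one_eq_succ] at hlt)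
        exact this
      exact (R.succ_subset ν hν hγ).trans (ih ν (lt_add_one ν) hν β hβν)
    · rw [R.limit_eq γ hγ hlim]
      intro x hx
      have := Set.mem_iInter.mp hx β
      exact Set.mem_iInter.mp this hlt

/-- The "extension" of a family of sets defined below `γ` to a genuine `URel`. -/
def extB (γ : Ordinal.{u}) (E : ∀ ε, ε < γ → Set X) : URel α X where
  rel ζ _ := ⋂ ε, ⋂ _ : ε + 1 ≤ ζ, ⋂ h2 : ε + 1 < γ, E (ε + 1) h2
  zero h := by
    apply Set.eq_univ_iff_forall.mpr
    intro x
    refine Set.mem_iInter.mpr fun ε => Set.mem_iInter.mpr fun h1 => ?_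
    exact absurd ((lt_add_one ε).trans_le h1) (not_lt_zero (a := ε))
  succ_subset β h h' := by
    intro x hx
    refine Set.mem_iInter.mpr fun ε => Set.mem_iInter.mpr fun h1 => ?_
    exact Set.mem_iInter.mp (Set.mem_iInter.mp hx ε) (h1.trans (le_of_lt (lt_add_one β)))
  limit_eq β h hlim := by
    ext x
    simp only [Set.mem_iInter]
    constructor
    · intro hx ζ hζ ε h1 h2
      exact hx ε (h1.trans hζ.le) h2
    · intro hx ε h1 h2
      have hε1 : ε + 1 < β := by
        rcases lt_or_eq_of_le h1 with h | h
        · exact h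
        · exfalso
          rw [Ordinal.add_one_eq_succ] at h
          exact (hlim.succ_lt ((lt_add_one ε).trans_le h1)).ne h
      exact hx (ε + 1) hε1 ε le_rfl h2

variable (F : URel α X → URel α X)

noncomputable def approx : Ordinal.{u} → Set X :=
  Ordinal.lt_wf.fix fun γ ih =>
    if h : γ < α then (F (extB γ ih)).rel γ h else ∅

/-- Stage-`γ` approximant. -/
noncomputable def stage (γ : Ordinal.{u}) : URel α X :=
  extB γ fun ε _ => approx F ε

theorem approx_eq (γ : Ordinal.{u}) (h : γ < α) :
    approx F γ = (F (stage F γ)).rel γ h := by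
  have := Ordinal.lt_wf.fix_eq
    (fun γ (ih : ∀ ε, ε < γ → Set X) =>
      if h : γ < α then (F (extB γ ih)).rel γ h else ∅) γ
  rw [approx, this, dif_pos h]
  rfl

theorem stage_nequiv {γ γ' ν : Ordinal.{u}} (hγ : ν < γ) (hγ' : ν < γ') :
    (stage F γ).NEquiv (stage F γ') ν := by
  intro η hη hην
  show ⋂ ε, ⋂ _ : ε + 1 ≤ η, ⋂ _ : ε + 1 < γ, approx F (ε + 1)
      = ⋂ ε, ⋂ _ : ε + 1 ≤ η, ⋂ _ : ε + 1 < γ', approx F (ε + 1)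
  ext x
  simp only [Set.mem_iInter]
  constructor
  · intro hx ε h1 _
    exact hx ε h1 (lt_of_le_of_lt h1 (lt_of_le_of_lt hην hγ))
  · intro hx ε h1 _
    exact hx ε h1 (lt_of_le_of_lt h1 (lt_of_le_of_lt hην hγ'))

variable (hF : Contractive F)
include hF

theorem coh : ∀ β (hβ : β < α) γ γ', β ≤ γ → β ≤ γ' →
    (F (stage F γ)).rel β hβ = (F (stage F γ')).rel β hβ := by
  intro β
  induction β using Ordinal.induction with
  | _ β ih =>
    intro hβ γ γ' hγ hγ'
    rcases Ordinal.zero_or_succ_or_isSuccLimit β with rfl | ⟨ν, rfl⟩ | hlim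
    · rw [(F (stage F γ)).zero hβ, (F (stage F γ')).zero hβ]
    · rw [← Ordinal.add_one_eq_succ] at *
      have hν : ν < α := (lt_add_one ν).trans hβ
      have h1 : ν < γ := lt_of_lt_of_le (lt_add_one ν) hγ
      have h2 : ν < γ' := lt_of_lt_of_le (lt_add_one ν) hγ'
      exact hF _ _ ν hν (stage_nequiv F h1 h2) (ν + 1) hβ le_rfl
    · rw [(F (stage F γ)).limit_eq β hβ hlim, (F (stage F γ')).limit_eq β hβ hlim]
      apply Set.iInter_congr
      intro ζ
      apply Set.iInter_congr
      intro hζ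
      exact ih ζ hζ (hζ.trans hβ) γ γ' ((le_of_lt hζ).trans hγ) ((le_of_lt hζ).trans hγ')

theorem approx_eq' (β : Ordinal.{u}) (hβ : β < α) (γ : Ordinal.{u}) (hγ : β ≤ γ) :
    approx F β = (F (stage F γ)).rel β hβ := by
  rw [approx_eq F β hβ]
  exact coh F hF β hβ β γ le_rfl hγ

theorem approx_anti {β γ : Ordinal.{u}} (hγ : γ < α) (hβγ : β ≤ γ) :
    approx F γ ⊆ approx F β := by
  have hβ : β < α := lt_of_le_of_lt hβγ hγ
  rw [approx_eq' F hF γ hγ (γ + 1) (le_of_lt (lt_add_one γ)),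
      approx_eq' F hF β hβ (γ + 1) (hβγ.trans (le_of_lt (lt_add_one γ)))]
  exact rel_anti _ γ hγ β hβγ

omit hF in
theorem approx_zero (h0 : (0 : Ordinal.{u}) < α) : approx F 0 = (Set.univ : Set X) := by
  rw [approx_eq F 0 h0]
  exact (F (stage F 0)).zero h0

theorem approx_limit {γ : Ordinal.{u}} (hγ : γ < α) (hlim : Order.IsSuccLimit γ) :
    approx F γ = ⋂ β, ⋂ hβ : β < γ, approx F β := by
  rw [approx_eq F γ hγ, (F (stage F γ)).limit_eq γ hγ hlim]
  apply Set.iInter_congr; intro β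
  apply Set.iInter_congr; intro hβ
  exact (approx_eq' F hF β (hβ.trans hγ) γ hβ.le).symm

theorem approx_iInter (η : Ordinal.{u}) (hη : η < α) :
    approx F η = ⋂ ε, ⋂ _ : ε + 1 ≤ η, approx F (ε + 1) := by
  rcases Ordinal.zero_or_succ_or_isSuccLimit η with rfl | ⟨μ, rfl⟩ | hlim
  · rw [approx_zero F hη]
    apply (Set.eq_univ_iff_forall.mpr _).symm
    intro x
    refine Set.mem_iInter.mpr fun ε => Set.mem_iInter.mpr fun h1 => ?_
    exact absurd ((lt_add_one ε).trans_le h1) (not_lt_zero (a := ε))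
  · rw [← Ordinal.add_one_eq_succ] at *
    apply subset_antisymm
    · refine Set.subset_iInter fun ε => Set.subset_iInter fun h1 => ?_
      exact approx_anti F hF hη h1
    · intro x hx
      exact Set.mem_iInter.mp (Set.mem_iInter.mp hx μ) le_rfl
  · rw [approx_limit F hF hη hlim]
    ext x
    simp only [Set.mem_iInter]
    constructor
    · intro hx ε h1
      refine hx (ε + 1) ?_
      rcases lt_or_eq_of_le h1 with h | h
      · exact h
      · exfalso
        rw [Ordinal.add_one_eq_succ] at h
        exact (hlim.succ_lt ((lt_add_one ε).trans_le h1)).ne h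
    · intro hx β hβ
      have hβ1 : β + 1 < η := by
        rw [Ordinal.add_one_eq_succ]; exact hlim.succ_lt hβ
      exact approx_anti F hF (hβ1.trans hη) (le_of_lt (lt_add_one β)) (hx β hβ1.le)

/-- The fixed point. -/
noncomputable def fixR : URel α X where
  rel γ _ := approx F γ
  zero h := approx_zero F h
  succ_subset β h h' := approx_anti F hF h' (le_of_lt (lt_add_one β))
  limit_eq β h hlim := approx_limit F hF h hlim

theorem fixR_nequiv {γ ν : Ordinal.{u}} (hν : ν < γ) (hνα : ν < α) :
    (fixR F hF).NEquiv (stage F γ) ν := by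
  intro η hη hην
  show approx F η = ⋂ ε, ⋂ _ : ε + 1 ≤ η, ⋂ _ : ε + 1 < γ, approx F (ε + 1)
  rw [approx_iInter F hF η hη]
  ext x
  simp only [Set.mem_iInter]
  constructor
  · intro hx ε h1 _; exact hx ε h1
  · intro hx ε h1; exact hx ε h1 (lt_of_le_of_lt h1 (lt_of_le_of_lt hην hν))

theorem fixR_fixed : F (fixR F hF) = fixR F hF := by
  apply urel_ext
  funext γ hγ
  show (F (fixR F hF)).rel γ hγ = approx F γ
  induction γ using Ordinal.induction with
  | _ γ ih =>
    rcases Ordinal.zero_or_succ_or_isSuccLimit γ with rfl | ⟨ν, rfl⟩ | hlim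
    · rw [(F (fixR F hF)).zero hγ, approx_zero F hγ]
    · have hγ' : ν + 1 < α := by rwa [Ordinal.add_one_eq_succ]
      have hν : ν < α := (lt_add_one ν).trans hγ'
      show (F (fixR F hF)).rel (ν + 1) hγ' = approx F (ν + 1)
      rw [approx_eq F (ν + 1) hγ']
      exact hF _ _ ν hν (fixR_nequiv F hF (lt_add_one ν) hν) (ν + 1) hγ' le_rfl
    · rw [(F (fixR F hF)).limit_eq γ hγ hlim, approx_limit F hF hγ hlim]
      apply Set.iInter_congr; intro β
      apply Set.iInter_congr; intro hβ
      exact ih β hβ (hβ.trans hγ)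

theorem fixed_unique {R S : URel α X} (hR : F R = R) (hS : F S = S) : R = S := by
  apply urel_ext
  funext γ hγ
  induction γ using Ordinal.induction with
  | _ γ ih =>
    rcases Ordinal.zero_or_succ_or_isSuccLimit γ with rfl | ⟨ν, rfl⟩ | hlim
    · rw [R.zero hγ, S.zero hγ]
    · rw [← Ordinal.add_one_eq_succ] at *
      have hν : ν < α := (lt_add_one ν).trans hγ
      have hne : R.NEquiv S ν := fun η hη hην => ih η (lt_of_le_of_lt hην (lt_add_one ν)) hη
      have := hF R S ν hν hne (ν + 1) hγ le_rfl
      rwa [hR, hS] at this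
    · rw [R.limit_eq γ hγ hlim, S.limit_eq γ hγ hlim]
      apply Set.iInter_congr; intro β
      apply Set.iInter_congr; intro hβ
      exact ih β hβ (hβ.trans hγ)

end URelAux

/-- Every contractive function `F : URel_α(X) → URel_α(X)` (for `α` a limit
ordinal) has a unique fixed point. -/
theorem contractive_has_unique_fixed_point {α : Ordinal.{u}} (hα : Order.IsSuccLimit α)
    {X : Type v} (F : URel α X → URel α X) (hF : Contractive F) :
    ∃! R : URel α X, F R = R :=
  ⟨URelAux.fixR F hF, URelAux.fixR_fixed F hF,
    fun S hS => URelAux.fixed_unique F hF hS (URelAux.fixR_fixed F hF)⟩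
end

section
/- Stratified must-convergence: for every closed term e of the calculus, e⇓ holds if and only if there exists an ordinal β < ω₁ (ω₁ the least uncountable ordinal) with e↯_β, where e↯_β is defined by ordinal induction: e↯_β iff for every e' with e ↦ e' there exists ν < β with e'↯_ν. -/
set_option maxHeartbeats 1000000

namespace CountChoice

/-! ## Syntax: types and terms (de Bruijn indices) -/

/-- Types: type variables, unit, products, functions, recursive sum types
`μα.(τ₁+…+τₙ)` (the `μ` binds one type variable, common to all summands),
and universal types `∀α.τ`. -/
inductive Ty : Type where
  | var : ℕ → Ty
  | unit : Ty
  | prod : Ty → Ty → Ty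
  | arrow : Ty → Ty → Ty
  | mu : (m : ℕ) → (Fin m → Ty) → Ty
  | all : Ty → Ty

/-- Lifting a renaming under a binder. -/
def liftR (f : ℕ → ℕ) : ℕ → ℕ
  | 0 => 0
  | i + 1 => f i + 1

def Ty.rename (f : ℕ → ℕ) : Ty → Ty
  | .var i => .var (f i)
  | .unit => .unit
  | .prod a b => .prod (a.rename f) (b.rename f)
  | .arrow a b => .arrow (a.rename f) (b.rename f)
  | .mu m ts => .mu m (fun j => (ts j).rename (liftR f))
  | .all a => .all (a.rename (liftR f))

/-- Lifting a type substitution under a type binder. -/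
def liftS (σ : ℕ → Ty) : ℕ → Ty
  | 0 => .var 0
  | i + 1 => (σ i).rename Nat.succ

def Ty.subst (σ : ℕ → Ty) : Ty → Ty
  | .var i => σ i
  | .unit => .unit
  | .prod a b => .prod (a.subst σ) (b.subst σ)
  | .arrow a b => .arrow (a.subst σ) (b.subst σ)
  | .mu m ts => .mu m (fun j => (ts j).subst (liftS σ))
  | .all a => .all (a.subst (liftS σ))

/-- Extending a type substitution (cons). -/
def consTy (τ : Ty) (σ : ℕ → Ty) : ℕ → Ty
  | 0 => τ
  | i + 1 => σ i

/-- `Ty.subst1 σ τ` is `τ[σ/α]`, substitution of `σ` for the innermost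
type variable of `τ`. -/
def Ty.subst1 (σ : Ty) (τ : Ty) : Ty := τ.subst (consTy σ Ty.var)

/-- `Ty.Wf Δ τ`: all free type variables of `τ` are among the first `Δ`. -/
def Ty.Wf : ℕ → Ty → Prop
  | Δ, .var i => i < Δ
  | _, .unit => True
  | Δ, .prod a b => a.Wf Δ ∧ b.Wf Δ
  | Δ, .arrow a b => a.Wf Δ ∧ b.Wf Δ
  | Δ, .mu _ ts => ∀ j, (ts j).Wf (Δ + 1)
  | Δ, .all a => a.Wf (Δ + 1)

/-- Terms.  `case v m es` is `case v of (in₁ x₁.e₁ | … | inₘ xₘ.eₘ)`;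
`choice` is the countable choice `?`; `proj false`/`proj true` are the two
projections; `tapp v τ` is type application `v τ`; `tlam` is `Λα.e`. -/
inductive Tm : Type where
  | var : ℕ → Tm
  | unit : Tm
  | pair : Tm → Tm → Tm
  | lam : Tm → Tm
  | inj : ℕ → Tm → Tm
  | tlam : Tm → Tm
  | choice : Tm
  | proj : Bool → Tm → Tm
  | app : Tm → Tm → Tm
  | case : Tm → (m : ℕ) → (Fin m → Tm) → Tm
  | tapp : Tm → Ty → Tm

/-- Values. -/
inductive IsVal : Tm → Prop where
  | var : ∀ {x}, IsVal (.var x)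
  | unit : IsVal .unit
  | pair : ∀ {v₁ v₂}, IsVal v₁ → IsVal v₂ → IsVal (.pair v₁ v₂)
  | lam : ∀ {e}, IsVal (.lam e)
  | inj : ∀ {j v}, IsVal v → IsVal (.inj j v)
  | tlam : ∀ {e}, IsVal (.tlam e)

/-- Renaming of term variables. -/
def Tm.rename (f : ℕ → ℕ) : Tm → Tm
  | .var i => .var (f i)
  | .unit => .unit
  | .pair a b => .pair (a.rename f) (b.rename f)
  | .lam e => .lam (e.rename (liftR f))
  | .inj j v => .inj j (v.rename f)
  | .tlam e => .tlam (e.rename f)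
  | .choice => .choice
  | .proj b v => .proj b (v.rename f)
  | .app a b => .app (a.rename f) (b.rename f)
  | .case v m es => .case (v.rename f) m (fun j => (es j).rename (liftR f))
  | .tapp v τ => .tapp (v.rename f) τ

/-- Renaming of type variables inside a term. -/
def Tm.tyRename (f : ℕ → ℕ) : Tm → Tm
  | .var i => .var i
  | .unit => .unit
  | .pair a b => .pair (a.tyRename f) (b.tyRename f)
  | .lam e => .lam (e.tyRename f)
  | .inj j v => .inj j (v.tyRename f)
  | .tlam e => .tlam (e.tyRename (liftR f))
  | .choice => .choice
  | .proj b v => .proj b (v.tyRename f)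
  | .app a b => .app (a.tyRename f) (b.tyRename f)
  | .case v m es => .case (v.tyRename f) m (fun j => (es j).tyRename f)
  | .tapp v τ => .tapp (v.tyRename f) (τ.rename f)

/-- Lifting a term substitution under a term binder. -/
def liftT (σ : ℕ → Tm) : ℕ → Tm
  | 0 => .var 0
  | i + 1 => (σ i).rename Nat.succ

/-- Substitution of terms for term variables. -/
def Tm.subst (σ : ℕ → Tm) : Tm → Tm
  | .var i => σ i
  | .unit => .unit
  | .pair a b => .pair (a.subst σ) (b.subst σ)
  | .lam e => .lam (e.subst (liftT σ))
  | .inj j v => .inj j (v.subst σ)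
  | .tlam e => .tlam (e.subst (fun i => (σ i).tyRename Nat.succ))
  | .choice => .choice
  | .proj b v => .proj b (v.subst σ)
  | .app a b => .app (a.subst σ) (b.subst σ)
  | .case v m es => .case (v.subst σ) m (fun j => (es j).subst (liftT σ))
  | .tapp v τ => .tapp (v.subst σ) τ

/-- Substitution of types for type variables inside a term. -/
def Tm.tySubst (σ : ℕ → Ty) : Tm → Tm
  | .var i => .var i
  | .unit => .unit
  | .pair a b => .pair (a.tySubst σ) (b.tySubst σ)
  | .lam e => .lam (e.tySubst σ)
  | .inj j v => .inj j (v.tySubst σ)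
  | .tlam e => .tlam (e.tySubst (liftS σ))
  | .choice => .choice
  | .proj b v => .proj b (v.tySubst σ)
  | .app a b => .app (a.tySubst σ) (b.tySubst σ)
  | .case v m es => .case (v.tySubst σ) m (fun j => (es j).tySubst σ)
  | .tapp v τ => .tapp (v.tySubst σ) (τ.subst σ)

/-- Extending a term substitution (cons). -/
def consTm (v : Tm) (σ : ℕ → Tm) : ℕ → Tm
  | 0 => v
  | i + 1 => σ i

/-- `subst1 v e` is `e[v/x]` for the innermost term variable. -/
def subst1 (v : Tm) (e : Tm) : Tm := e.subst (consTm v Tm.var)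

/-- `tySubst1 σ e` is `e[σ/α]` for the innermost type variable. -/
def tySubst1 (σ : Ty) (e : Tm) : Tm := e.tySubst (consTy σ Ty.var)

/-- A term is closed if it is invariant under all term- and type-variable
substitutions. -/
def Tm.Closed (e : Tm) : Prop :=
  (∀ σ : ℕ → Tm, e.subst σ = e) ∧ (∀ σ : ℕ → Ty, e.tySubst σ = e)

/-! ## Numerals and the type of natural numbers -/

/-- `nat = μα.(1+α)`. -/
def natTy : Ty := .mu 2 ![.unit, .var 0]

/-- Numerals `n̲`. -/
def numeral : ℕ → Tm
  | 0 => .inj 0 .unit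
  | n + 1 => .inj 1 (numeral n)

/-! ## Operational semantics -/

/-- Labels classifying reduction steps.  `unfold` labels the unfold-fold
(case) reductions, `choice` labels the `? ↦ n̲` reductions. -/
inductive Lbl : Type where
  | beta | projred | tbeta | unfold | choice

/-- Labeled one-step reduction. -/
inductive Step : Tm → Lbl → Tm → Prop where
  | projFst : ∀ {v₁ v₂}, IsVal v₁ → IsVal v₂ →
      Step (.proj false (.pair v₁ v₂)) .projred v₁
  | projSnd : ∀ {v₁ v₂}, IsVal v₁ → IsVal v₂ →
      Step (.proj true (.pair v₁ v₂)) .projred v₂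
  | beta : ∀ {e v}, IsVal v → Step (.app (.lam e) v) .beta (subst1 v e)
  | tbeta : ∀ {e τ}, Step (.tapp (.tlam e) τ) .tbeta (tySubst1 τ e)
  | caseInj : ∀ {m : ℕ} {es : Fin m → Tm} {j : ℕ} {v} (h : j < m), IsVal v →
      Step (.case (.inj j v) m es) .unfold (subst1 v (es ⟨j, h⟩))
  | choice : ∀ n : ℕ, Step .choice .choice (numeral n)
  | appArg : ∀ {v e l e'}, IsVal v → Step e l e' → Step (.app v e) l (.app v e')

/-- One-step reduction `e ↦ e'`. -/
def Red (e e' : Tm) : Prop := ∃ l, Step e l e'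

/-- `StepsU e n e'`: `e ↦* e'` with exactly `n` unfold-fold reductions in
the sequence. -/
inductive StepsU : Tm → ℕ → Tm → Prop where
  | refl : ∀ {e}, StepsU e 0 e
  | unfold : ∀ {e e₁ n e₂}, Step e .unfold e₁ → StepsU e₁ n e₂ → StepsU e (n + 1) e₂
  | other : ∀ {e l e₁ n e₂}, l ≠ .unfold → Step e l e₁ → StepsU e₁ n e₂ → StepsU e n e₂

/-- May-convergence `e↓`. -/
def MayConv (e : Tm) : Prop := ∃ n v, StepsU e n v ∧ IsVal v

/-- `e↓ₙ`: `e` reduces to a value with at most `n` unfold-fold reductions. -/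
def MayConvN (e : Tm) (n : ℕ) : Prop := ∃ m ≤ n, ∃ v, StepsU e m v ∧ IsVal v

/-- `e ⇝¹ e'`: `e ↦* e'` with exactly one unfold-fold reduction. -/
def UnfoldOne (e e' : Tm) : Prop := StepsU e 1 e'

/-- `e ⇝ᵖ e'`: `e ↦* e'` with no choice reductions. -/
inductive PSteps : Tm → Tm → Prop where
  | refl : ∀ {e}, PSteps e e
  | step : ∀ {e l e₁ e₂}, l ≠ .choice → Step e l e₁ → PSteps e₁ e₂ → PSteps e e₂

/-- `e ⇝ᵖ⁰ e'`: `e ↦* e'` with no choice reductions and no unfold-fold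
reductions. -/
inductive P0Steps : Tm → Tm → Prop where
  | refl : ∀ {e}, P0Steps e e
  | step : ∀ {e l e₁ e₂}, l ≠ .choice → l ≠ .unfold → Step e l e₁ →
      P0Steps e₁ e₂ → P0Steps e e₂

/-- Must-convergence `e⇓`: the least predicate closed under the rule
"if every one-step reduct of `e` must-converges then so does `e`". -/
inductive Must : Tm → Prop where
  | intro : ∀ {e}, (∀ e', Red e e' → Must e') → Must e

/-- The least uncountable ordinal `ω₁`. -/
noncomputable def omega1 : Ordinal.{0} := (Cardinal.aleph 1).ord

/-- The stratified predicate `e↯_β`, defined by ordinal induction: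
`e↯_β` iff every one-step reduct `e'` of `e` satisfies `e'↯_ν`
for some `ν < β`. -/
def Lightning (β : Ordinal.{0}) (e : Tm) : Prop :=
  ∀ e', Red e e' → ∃ ν : {ν : Ordinal.{0} // ν < β}, Lightning ν.1 e'
termination_by β
decreasing_by exact ν.2

/-- The stratified must-convergence predicate `e⇓_β`, defined by ordinal
induction: `e⇓_β` iff whenever `e ⇝¹ e'` there is `ν < β` with `e'⇓_ν`. -/
def MustStrat (β : Ordinal.{0}) (e : Tm) : Prop :=
  ∀ e', UnfoldOne e e' → ∃ ν : {ν : Ordinal.{0} // ν < β}, MustStrat ν.1 e'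
termination_by β
decreasing_by exact ν.2

/-! ## Typing -/

/-- `Δ ⊢ Γ`: all types in the context are well-formed in `Δ`. -/
def CtxWf (Δ : ℕ) (Γ : List Ty) : Prop := ∀ τ ∈ Γ, Ty.Wf Δ τ

/-- The typing judgement `Δ;Γ ⊢ e : τ` (`Δ` counts type variables, `Γ` is the
list of types of term variables, innermost first). -/
inductive HasTy : ℕ → List Ty → Tm → Ty → Prop where
  | var : ∀ {Δ Γ x τ}, CtxWf Δ Γ → Γ[x]? = some τ → HasTy Δ Γ (.var x) τ
  | unit : ∀ {Δ Γ}, CtxWf Δ Γ → HasTy Δ Γ .unit .unit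
  | pair : ∀ {Δ Γ v₁ v₂ τ₁ τ₂}, IsVal v₁ → IsVal v₂ →
      HasTy Δ Γ v₁ τ₁ → HasTy Δ Γ v₂ τ₂ → HasTy Δ Γ (.pair v₁ v₂) (.prod τ₁ τ₂)
  | lam : ∀ {Δ Γ e τ₁ τ₂}, Ty.Wf Δ τ₁ → HasTy Δ (τ₁ :: Γ) e τ₂ →
      HasTy Δ Γ (.lam e) (.arrow τ₁ τ₂)
  | inj : ∀ {Δ Γ v} {m : ℕ} {ts : Fin m → Ty} {j : ℕ} (h : j < m), IsVal v →
      Ty.Wf Δ (.mu m ts) →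
      HasTy Δ Γ v (Ty.subst1 (.mu m ts) (ts ⟨j, h⟩)) →
      HasTy Δ Γ (.inj j v) (.mu m ts)
  | tlam : ∀ {Δ Γ e τ}, HasTy (Δ + 1) (Γ.map (Ty.rename Nat.succ)) e τ →
      HasTy Δ Γ (.tlam e) (.all τ)
  | proj : ∀ {Δ Γ v τ₁ τ₂} (b : Bool), IsVal v → HasTy Δ Γ v (.prod τ₁ τ₂) →
      HasTy Δ Γ (.proj b v) (bif b then τ₂ else τ₁)
  | app : ∀ {Δ Γ v e τ₁ τ₂}, IsVal v → HasTy Δ Γ v (.arrow τ₁ τ₂) →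
      HasTy Δ Γ e τ₁ → HasTy Δ Γ (.app v e) τ₂
  | case : ∀ {Δ Γ v τ'} {m : ℕ} {ts : Fin m → Ty} {es : Fin m → Tm}, IsVal v →
      HasTy Δ Γ v (.mu m ts) →
      (∀ j : Fin m, HasTy Δ (Ty.subst1 (.mu m ts) (ts j) :: Γ) (es j) τ') →
      HasTy Δ Γ (.case v m es) τ'
  | tapp : ∀ {Δ Γ v τ σ}, IsVal v → HasTy Δ Γ v (.all τ) → Ty.Wf Δ σ →
      HasTy Δ Γ (.tapp v σ) (Ty.subst1 σ τ)
  | choice : ∀ {Δ Γ}, CtxWf Δ Γ → HasTy Δ Γ .choice natTy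

/-! ## Evaluation contexts -/

/-- Evaluation contexts `E ::= [] | v E` are represented as lists of the
applied values, outermost first. -/
def plug (E : List Tm) (e : Tm) : Tm := E.foldr .app e

/-- Typing of evaluation contexts, `⊢ E : τ ⊸ τ'`. -/
inductive ECtxTy : List Tm → Ty → Ty → Prop where
  | nil : ∀ {τ}, Ty.Wf 0 τ → ECtxTy [] τ τ
  | cons : ∀ {v E τ₁ τ τ₂}, IsVal v → HasTy 0 [] v (.arrow τ τ₂) →
      ECtxTy E τ₁ τ → ECtxTy (v :: E) τ₁ τ₂

/-! ## CIU preorders -/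

/-- A closing type substitution `δ ∈ Type^Δ`. -/
def TySubstOK (Δ : ℕ) (δ : ℕ → Ty) : Prop := ∀ i < Δ, Ty.Wf 0 (δ i)

/-- A type-respecting closing value substitution `γ ∈ Subst(Γ)`. -/
def SubstOK (Γ : List Ty) (γ : ℕ → Tm) : Prop :=
  ∀ i τ, Γ[i]? = some τ → IsVal (γ i) ∧ HasTy 0 [] (γ i) τ

/-- The may-CIU preorder `Δ;Γ ⊢ e ≾↓ciu e' : τ`. -/
def CiuMay (Δ : ℕ) (Γ : List Ty) (e e' : Tm) (τ : Ty) : Prop :=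
  HasTy Δ Γ e τ ∧ HasTy Δ Γ e' τ ∧
  ∀ δ, TySubstOK Δ δ → ∀ γ, SubstOK (Γ.map (Ty.subst δ)) γ →
  ∀ E τ', ECtxTy E (τ.subst δ) τ' →
  MayConv (plug E ((e.tySubst δ).subst γ)) → MayConv (plug E ((e'.tySubst δ).subst γ))

/-- The must-CIU preorder `Δ;Γ ⊢ e ≾⇓ciu e' : τ`. -/
def CiuMust (Δ : ℕ) (Γ : List Ty) (e e' : Tm) (τ : Ty) : Prop :=
  HasTy Δ Γ e τ ∧ HasTy Δ Γ e' τ ∧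
  ∀ δ, TySubstOK Δ δ → ∀ γ, SubstOK (Γ.map (Ty.subst δ)) γ →
  ∀ E τ', ECtxTy E (τ.subst δ) τ' →
  Must (plug E ((e.tySubst δ).subst γ)) → Must (plug E ((e'.tySubst δ).subst γ))

/-! ## Type-indexed relations, precongruences and contextual approximation -/

/-- A type-indexed relation. -/
def TIRel : Type := ℕ → List Ty → Tm → Tm → Ty → Prop

/-- A type-indexed relation relates only well-typed terms. -/
def WellTypedRel (R : TIRel) : Prop :=
  ∀ Δ Γ e e' τ, R Δ Γ e e' τ → HasTy Δ Γ e τ ∧ HasTy Δ Γ e' τ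

def ReflRel (R : TIRel) : Prop := ∀ Δ Γ e τ, HasTy Δ Γ e τ → R Δ Γ e e τ

def TransRel (R : TIRel) : Prop :=
  ∀ Δ Γ e₁ e₂ e₃ τ, R Δ Γ e₁ e₂ τ → R Δ Γ e₂ e₃ τ → R Δ Γ e₁ e₃ τ

/-- The compatibility rules (one for each term former). -/
structure Compatible (R : TIRel) : Prop where
  var : ∀ {Δ Γ x τ}, CtxWf Δ Γ → Γ[x]? = some τ → R Δ Γ (.var x) (.var x) τ
  unit : ∀ {Δ Γ}, CtxWf Δ Γ → R Δ Γ .unit .unit .unit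
  pair : ∀ {Δ Γ v₁ v₂ v₁' v₂' τ₁ τ₂}, IsVal v₁ → IsVal v₂ → IsVal v₁' → IsVal v₂' →
      R Δ Γ v₁ v₁' τ₁ → R Δ Γ v₂ v₂' τ₂ →
      R Δ Γ (.pair v₁ v₂) (.pair v₁' v₂') (.prod τ₁ τ₂)
  lam : ∀ {Δ Γ e e' τ₁ τ₂}, Ty.Wf Δ τ₁ → R Δ (τ₁ :: Γ) e e' τ₂ →
      R Δ Γ (.lam e) (.lam e') (.arrow τ₁ τ₂)
  inj : ∀ {Δ Γ v v'} {m : ℕ} {ts : Fin m → Ty} {j : ℕ} (h : j < m),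
      IsVal v → IsVal v' → Ty.Wf Δ (.mu m ts) →
      R Δ Γ v v' (Ty.subst1 (.mu m ts) (ts ⟨j, h⟩)) →
      R Δ Γ (.inj j v) (.inj j v') (.mu m ts)
  tlam : ∀ {Δ Γ e e' τ}, R (Δ + 1) (Γ.map (Ty.rename Nat.succ)) e e' τ →
      R Δ Γ (.tlam e) (.tlam e') (.all τ)
  proj : ∀ {Δ Γ v v' τ₁ τ₂} (b : Bool), IsVal v → IsVal v' →
      R Δ Γ v v' (.prod τ₁ τ₂) →
      R Δ Γ (.proj b v) (.proj b v') (bif b then τ₂ else τ₁)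
  app : ∀ {Δ Γ v v' e e' τ₁ τ₂}, IsVal v → IsVal v' →
      R Δ Γ v v' (.arrow τ₁ τ₂) → R Δ Γ e e' τ₁ →
      R Δ Γ (.app v e) (.app v' e') τ₂
  case : ∀ {Δ Γ v v' τ'} {m : ℕ} {ts : Fin m → Ty} {es es' : Fin m → Tm},
      IsVal v → IsVal v' → R Δ Γ v v' (.mu m ts) →
      (∀ j : Fin m, R Δ (Ty.subst1 (.mu m ts) (ts j) :: Γ) (es j) (es' j) τ') →
      R Δ Γ (.case v m es) (.case v' m es') τ'
  tapp : ∀ {Δ Γ v v' τ σ}, IsVal v → IsVal v' → R Δ Γ v v' (.all τ) →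
      Ty.Wf Δ σ → R Δ Γ (.tapp v σ) (.tapp v' σ) (Ty.subst1 σ τ)
  choice : ∀ {Δ Γ}, CtxWf Δ Γ → R Δ Γ .choice .choice natTy

/-- May-adequacy. -/
def MayAdequate (R : TIRel) : Prop :=
  ∀ e e' τ, R 0 [] e e' τ → MayConv e → MayConv e'

/-- Must-adequacy. -/
def MustAdequate (R : TIRel) : Prop :=
  ∀ e e' τ, R 0 [] e e' τ → Must e → Must e'

/-- May-contextual approximation `Δ;Γ ⊢ e ≾↓ctx e' : τ`: the largest
may-adequate precongruence. -/
def CtxMay (Δ : ℕ) (Γ : List Ty) (e e' : Tm) (τ : Ty) : Prop :=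
  ∃ R : TIRel, WellTypedRel R ∧ ReflRel R ∧ TransRel R ∧ Compatible R ∧
    MayAdequate R ∧ R Δ Γ e e' τ

/-- Must-contextual approximation `Δ;Γ ⊢ e ≾⇓ctx e' : τ`: the largest
must-adequate precongruence. -/
def CtxMust (Δ : ℕ) (Γ : List Ty) (e e' : Tm) (τ : Ty) : Prop :=
  ∃ R : TIRel, WellTypedRel R ∧ ReflRel R ∧ TransRel R ∧ Compatible R ∧
    MustAdequate R ∧ R Δ Γ e e' τ

/-- May-contextual equivalence `≅↓ctx`. -/
def CtxMayEq (Δ : ℕ) (Γ : List Ty) (e e' : Tm) (τ : Ty) : Prop :=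
  CtxMay Δ Γ e e' τ ∧ CtxMay Δ Γ e' e τ

/-- Must-contextual equivalence `≅⇓ctx`. -/
def CtxMustEq (Δ : ℕ) (Γ : List Ty) (e e' : Tm) (τ : Ty) : Prop :=
  CtxMust Δ Γ e e' τ ∧ CtxMust Δ Γ e' e τ

/-- Contextual equivalence `≅ctx` (intersection of may and must). -/
def CtxEq (Δ : ℕ) (Γ : List Ty) (e e' : Tm) (τ : Ty) : Prop :=
  CtxMayEq Δ Γ e e' τ ∧ CtxMustEq Δ Γ e e' τ

end CountChoice

namespace CountChoice

/-! ## Step-indexed uniform value relations and the may logical relation -/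

/-- Step-indexed relations on terms (indexed over `ω`). -/
def SIRel : Type := ℕ → Tm → Tm → Prop

/-- Extending a relational environment (cons). -/
def consRel (r : SIRel) (ρ : ℕ → SIRel) : ℕ → SIRel
  | 0 => r
  | i + 1 => ρ i

/-- `r ∈ VRel_ω(σ,σ')`: an `ω`-indexed uniform relation on `Val(σ) × Val(σ')`:
it relates only closed values of the given types, its 0-th component is all of
`Val(σ) × Val(σ')`, and it is decreasing in the index. -/
def IsVRel (σ σ' : Ty) (r : SIRel) : Prop :=
  (∀ n v v', r n v v' → (IsVal v ∧ HasTy 0 [] v σ) ∧ (IsVal v' ∧ HasTy 0 [] v' σ')) ∧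
  (∀ v v', IsVal v → HasTy 0 [] v σ → IsVal v' → HasTy 0 [] v' σ' → r 0 v v') ∧
  (∀ n v v', r (n + 1) v v' → r n v v')

/-- The lift `r⊤` of a step-indexed relation to evaluation contexts
(for may-convergence). -/
def sTopMay (r : SIRel) (n : ℕ) (E E' : List Tm) : Prop :=
  ∀ j ≤ n, ∀ v v', r j v v' → MayConvN (plug E v) j → MayConv (plug E' v')

/-- The biorthogonal lift `r⊤⊤` of a step-indexed relation to terms
(for may-convergence). -/
def ttopMay (r : SIRel) : SIRel := fun n e e' =>
  ∀ j ≤ n, ∀ E E', sTopMay r j E E' → MayConvN (plug E e) j → MayConv (plug E' e')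

/-- The may logical relation `⟦τ⟧(r⃗)`, given closing type substitutions
`δ, δ'` and a relational environment `ρ` with `ρ i ∈ VRel_ω(δ i, δ' i)`;
it is an `ω`-indexed uniform relation on `Val(τδ) × Val(τδ')`.
Recursive types are interpreted by the unique (guarded) fixed point
`fix s.⋃ⱼ inⱼ(▷⟦τⱼ⟧(r⃗,s))`, where `(▷R)ₙ = ⋂_{k<n} Rₖ`. -/
def interpMay : Ty → (ℕ → Ty) → (ℕ → Ty) → (ℕ → SIRel) → SIRel
  | .var i, _, _, ρ => ρ i
  | .unit, _, _, _ => fun _ v v' => v = .unit ∧ v' = .unit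
  | .prod τ₁ τ₂, δ, δ', ρ => fun n v v' =>
      ∃ v₁ v₂ v₁' v₂', v = .pair v₁ v₂ ∧ v' = .pair v₁' v₂' ∧
        interpMay τ₁ δ δ' ρ n v₁ v₁' ∧ interpMay τ₂ δ δ' ρ n v₂ v₂'
  | .arrow τ₁ τ₂, δ, δ', ρ => fun n v v' =>
      ∃ e e', v = .lam e ∧ v' = .lam e' ∧
        HasTy 0 [] v ((Ty.arrow τ₁ τ₂).subst δ) ∧
        HasTy 0 [] v' ((Ty.arrow τ₁ τ₂).subst δ') ∧
        ∀ m ≤ n, ∀ u u', interpMay τ₁ δ δ' ρ m u u' →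
          ttopMay (interpMay τ₂ δ δ' ρ) m (subst1 u e) (subst1 u' e')
  | .all τ, δ, δ', ρ => fun n v v' =>
      ∃ e e', v = .tlam e ∧ v' = .tlam e' ∧
        HasTy 0 [] v ((Ty.all τ).subst δ) ∧
        HasTy 0 [] v' ((Ty.all τ).subst δ') ∧
        ∀ σ σ', Ty.Wf 0 σ → Ty.Wf 0 σ' → ∀ r : SIRel, IsVRel σ σ' r →
          ttopMay (interpMay τ (consTy σ δ) (consTy σ' δ') (consRel r ρ)) n
            (tySubst1 σ e) (tySubst1 σ' e')
  | .mu m ts, δ, δ', ρ => fun n =>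
      Nat.strongRecOn (motive := fun _ => Tm → Tm → Prop) n
        (fun n ih v v' =>
          ∃ j, ∃ h : j < m, ∃ u u',
            v = .inj j u ∧ v' = .inj j u' ∧ IsVal u ∧ IsVal u' ∧
            HasTy 0 [] u (Ty.subst (consTy ((Ty.mu m ts).subst δ) δ) (ts ⟨j, h⟩)) ∧
            HasTy 0 [] u' (Ty.subst (consTy ((Ty.mu m ts).subst δ') δ') (ts ⟨j, h⟩)) ∧
            ∀ k, k < n →
              interpMay (ts ⟨j, h⟩)
                (consTy ((Ty.mu m ts).subst δ) δ)
                (consTy ((Ty.mu m ts).subst δ') δ')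
                (consRel (fun i u₁ u₂ => ∃ hi : i < n, ih i hi u₁ u₂) ρ) k u u')

/-- Pointwise relatedness of value substitutions, `(γ,γ') ∈ ⟦Γ⟧(r⃗)ₙ`. -/
def EnvRelMay (Γ : List Ty) (δ δ' : ℕ → Ty) (ρ : ℕ → SIRel) (n : ℕ)
    (γ γ' : ℕ → Tm) : Prop :=
  ∀ i τ, Γ[i]? = some τ → interpMay τ δ δ' ρ n (γ i) (γ' i)

/-- Logical may-approximation `Δ;Γ ⊢ e ≾↓log e' : τ`. -/
def LogMay (Δ : ℕ) (Γ : List Ty) (e e' : Tm) (τ : Ty) : Prop :=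
  HasTy Δ Γ e τ ∧ HasTy Δ Γ e' τ ∧
  ∀ δ δ', TySubstOK Δ δ → TySubstOK Δ δ' →
  ∀ ρ : ℕ → SIRel, (∀ i < Δ, IsVRel (δ i) (δ' i) (ρ i)) →
  ∀ n γ γ', EnvRelMay Γ δ δ' ρ n γ γ' →
  ttopMay (interpMay τ δ δ' ρ) n ((e.tySubst δ).subst γ) ((e'.tySubst δ').subst γ')

end CountChoice

namespace CountChoice

/-! ## Ordinal-indexed uniform value relations and the must logical relation -/

/-- Ordinal-indexed relations on terms. -/
def OSIRel : Type 1 := Ordinal.{0} → Tm → Tm → Prop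

/-- Extending an ordinal-indexed relational environment (cons). -/
def consORel (r : OSIRel) (ρ : ℕ → OSIRel) : ℕ → OSIRel
  | 0 => r
  | i + 1 => ρ i

/-- `r ∈ VRel_ω₁(σ,σ')`: an ordinal-indexed uniform relation on
`Val(σ) × Val(σ')`: it relates only closed values of the given types, its
0-th component is all of `Val(σ) × Val(σ')`, it is decreasing at successors
and it is the intersection of the earlier components at limits. -/
def IsOVRel (σ σ' : Ty) (r : OSIRel) : Prop :=
  (∀ β v v', r β v v' → (IsVal v ∧ HasTy 0 [] v σ) ∧ (IsVal v' ∧ HasTy 0 [] v' σ')) ∧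
  (∀ v v', IsVal v → HasTy 0 [] v σ → IsVal v' → HasTy 0 [] v' σ' → r 0 v v') ∧
  (∀ β v v', r (β + 1) v v' → r β v v') ∧
  (∀ β, Order.IsSuccLimit β → ∀ v v', (r β v v' ↔ ∀ ν < β, r ν v v'))

/-- The lift `r⊤` of an ordinal-indexed relation to evaluation contexts
(for must-convergence). -/
def sTopMust (r : OSIRel) (β : Ordinal.{0}) (E E' : List Tm) : Prop :=
  ∀ ν ≤ β, ∀ v v', r ν v v' → MustStrat ν (plug E v) → Must (plug E' v')

/-- The biorthogonal lift `r⊤⊤` of an ordinal-indexed relation to terms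
(for must-convergence). -/
def ttopMust (r : OSIRel) : OSIRel := fun β e e' =>
  ∀ ν ≤ β, ∀ E E', sTopMust r ν E E' → MustStrat ν (plug E e) → Must (plug E' e')

/-- The must logical relation `⟦τ⟧(r⃗)`, an ordinal-indexed uniform relation,
defined exactly as the may logical relation but with the must-biorthogonal
lifts. -/
def interpMust : Ty → (ℕ → Ty) → (ℕ → Ty) → (ℕ → OSIRel) → OSIRel
  | .var i, _, _, ρ => ρ i
  | .unit, _, _, _ => fun _ v v' => v = .unit ∧ v' = .unit
  | .prod τ₁ τ₂, δ, δ', ρ => fun β v v' =>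
      ∃ v₁ v₂ v₁' v₂', v = .pair v₁ v₂ ∧ v' = .pair v₁' v₂' ∧
        interpMust τ₁ δ δ' ρ β v₁ v₁' ∧ interpMust τ₂ δ δ' ρ β v₂ v₂'
  | .arrow τ₁ τ₂, δ, δ', ρ => fun β v v' =>
      ∃ e e', v = .lam e ∧ v' = .lam e' ∧
        HasTy 0 [] v ((Ty.arrow τ₁ τ₂).subst δ) ∧
        HasTy 0 [] v' ((Ty.arrow τ₁ τ₂).subst δ') ∧
        ∀ ν ≤ β, ∀ u u', interpMust τ₁ δ δ' ρ ν u u' →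
          ttopMust (interpMust τ₂ δ δ' ρ) ν (subst1 u e) (subst1 u' e')
  | .all τ, δ, δ', ρ => fun β v v' =>
      ∃ e e', v = .tlam e ∧ v' = .tlam e' ∧
        HasTy 0 [] v ((Ty.all τ).subst δ) ∧
        HasTy 0 [] v' ((Ty.all τ).subst δ') ∧
        ∀ σ σ', Ty.Wf 0 σ → Ty.Wf 0 σ' → ∀ r : OSIRel, IsOVRel σ σ' r →
          ttopMust (interpMust τ (consTy σ δ) (consTy σ' δ') (consORel r ρ)) β
            (tySubst1 σ e) (tySubst1 σ' e')
  | .mu m ts, δ, δ', ρ => fun β =>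
      (wellFounded_lt (α := Ordinal.{0})).fix
        (C := fun _ => Tm → Tm → Prop)
        (fun β ih v v' =>
          ∃ j, ∃ h : j < m, ∃ u u',
            v = .inj j u ∧ v' = .inj j u' ∧ IsVal u ∧ IsVal u' ∧
            HasTy 0 [] u (Ty.subst (consTy ((Ty.mu m ts).subst δ) δ) (ts ⟨j, h⟩)) ∧
            HasTy 0 [] u' (Ty.subst (consTy ((Ty.mu m ts).subst δ') δ') (ts ⟨j, h⟩)) ∧
            ∀ ν, ν < β →
              interpMust (ts ⟨j, h⟩)
                (consTy ((Ty.mu m ts).subst δ) δ)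
                (consTy ((Ty.mu m ts).subst δ') δ')
                (consORel (fun i u₁ u₂ => ∃ hi : i < β, ih i hi u₁ u₂) ρ) ν u u')
        β

/-- Pointwise relatedness of value substitutions, `(γ,γ') ∈ ⟦Γ⟧(r⃗)_β`. -/
def EnvRelMust (Γ : List Ty) (δ δ' : ℕ → Ty) (ρ : ℕ → OSIRel) (β : Ordinal.{0})
    (γ γ' : ℕ → Tm) : Prop :=
  ∀ i τ, Γ[i]? = some τ → interpMust τ δ δ' ρ β (γ i) (γ' i)

/-- Logical must-approximation `Δ;Γ ⊢ e ≾⇓log e' : τ`. -/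
def LogMust (Δ : ℕ) (Γ : List Ty) (e e' : Tm) (τ : Ty) : Prop :=
  HasTy Δ Γ e τ ∧ HasTy Δ Γ e' τ ∧
  ∀ δ δ', TySubstOK Δ δ → TySubstOK Δ δ' →
  ∀ ρ : ℕ → OSIRel, (∀ i < Δ, IsOVRel (δ i) (δ' i) (ρ i)) →
  ∀ β < omega1, ∀ γ γ', EnvRelMust Γ δ δ' ρ β γ γ' →
  ttopMust (interpMust τ δ δ' ρ) β ((e.tySubst δ).subst γ) ((e'.tySubst δ').subst γ')

end CountChoice

namespace CountChoice

/-! ## Derived terms -/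

/-- `let x = e₁ in e₂`, i.e. `(λx.e₂) e₁`. -/
def letIn (e₁ e₂ : Tm) : Tm := .app (.lam e₂) e₁

/-- The term `δ_f = λy.case y of (in y'. f(λx.let r = y' y in r x))`,
where `f` is the term variable of de Bruijn index 0 outside. -/
def deltaTm : Tm :=
  .lam (.case (.var 0) 1
    ![.app (.var 2)
        (.lam (letIn (.app (.var 1) (.var 2)) (.app (.var 0) (.var 1))))])

/-- The fixed point combinator
`fix = Λα,β.λf.δ_f(in δ_f) : ∀α,β.((α→β)→(α→β))→(α→β)`. -/
def fixTm : Tm := .tlam (.tlam (.lam (.app deltaTm (.inj 0 deltaTm))))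

/-- `fix τ₁ τ₂ v`, i.e. `let x = fix τ₁ in let y = x τ₂ in y v`. -/
def fixApp (τ₁ τ₂ : Ty) (v : Tm) : Tm :=
  letIn (.tapp fixTm τ₁)
    (letIn (.tapp (.var 0) τ₂) (.app (.var 0) (v.rename (· + 2))))

/-- The identity `id = λx.x`. -/
def idTm : Tm := .lam (.var 0)

/-- The divergent term `Ω = Λα.(fix 1 α)(λf.f)⟨⟩ : ∀α.α`. -/
def OmegaTm : Tm :=
  .tlam (letIn (fixApp .unit (.var 0) (.lam (.var 0))) (.app (.var 0) .unit))

/-- Erratic choice `e₁ or e₂`, i.e.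
`let x = ? in case x of (in₁ y.e₁ | in₂ y.e₂)`. -/
def orTm (e₁ e₂ : Tm) : Tm :=
  letIn .choice (.case (.var 0) 2 ![e₁.rename (· + 2), e₂.rename (· + 2)])

/-- Type application of a term: `w τ` abbreviates `let f = w in f τ`. -/
def letTapp (w : Tm) (τ : Ty) : Tm := letIn w (.tapp (.var 0) τ)

/-- `(λx.x t) w`: applies (the eventual value of) `w` to the closed term `t`. -/
def letAppArg (w t : Tm) : Tm := .app (.lam (.app (.var 0) t)) w

end CountChoice


namespace CountChoice

/-- Enumeration of the (at most countably many) one-step reducts of a term. -/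
def enum : Tm → ℕ → Tm
  | .choice, n => numeral n
  | .proj false (.pair v₁ _), _ => v₁
  | .proj true (.pair _ v₂), _ => v₂
  | .app (.lam e) v, 0 => subst1 v e
  | .app a b, n + 1 => .app a (enum b n)
  | .tapp (.tlam e) τ, _ => tySubst1 τ e
  | .case (.inj j v) m es, _ =>
      if h : j < m then subst1 v (es ⟨j, h⟩) else .unit
  | _, _ => .unit

lemma enum_complete {e l e'} (h : Step e l e') : ∃ n, enum e n = e' := by
  induction h with
  | projFst h1 h2 => exact ⟨0, rfl⟩
  | projSnd h1 h2 => exact ⟨0, rfl⟩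
  | beta hv => exact ⟨0, rfl⟩
  | tbeta => exact ⟨0, rfl⟩
  | caseInj h hv => exact ⟨0, by simp [enum, h]⟩
  | choice n => exact ⟨n, rfl⟩
  | appArg hv hs ih =>
      obtain ⟨n, hn⟩ := ih
      exact ⟨n + 1, by simp [enum, hn]⟩

lemma lightning_iff (β : Ordinal.{0}) (e : Tm) :
    Lightning β e ↔ ∀ e', Red e e' → ∃ ν < β, Lightning ν e' := by
  rw [Lightning]
  constructor
  · intro h e' he'
    obtain ⟨⟨ν, hν⟩, hl⟩ := h e' he'
    exact ⟨ν, hν, hl⟩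
  · intro h e' he'
    obtain ⟨ν, hν, hl⟩ := h e' he'
    exact ⟨⟨ν, hν⟩, hl⟩

lemma lightning_must : ∀ β (e : Tm), Lightning β e → Must e := by
  intro β
  induction β using Ordinal.induction with
  | h β ih =>
    intro e hl
    refine Must.intro fun e' hr => ?_
    obtain ⟨ν, hν, hl'⟩ := (lightning_iff β e).1 hl e' hr
    exact ih ν hν e' hl'

lemma omega1_pos : (0 : Ordinal.{0}) < omega1 := by
  have h : (Cardinal.aleph 0).ord < (Cardinal.aleph 1).ord :=
    Cardinal.ord_lt_ord.2 (Cardinal.aleph_lt_aleph.2 (by norm_num))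
  exact lt_of_le_of_lt zero_le h

lemma omega1_isLimit : Order.IsSuccLimit omega1 :=
  Cardinal.isSuccLimit_ord (by simpa using Cardinal.aleph0_le_aleph 1)

end CountChoice

namespace CountChoice

/-- **Stratified must-convergence** (Lemma 5.1): a closed term `e`
must-converges if and only if `e↯_β` for some `β < ω₁`, the least
uncountable ordinal. -/
theorem stratified_must_convergence (e : Tm) (he : e.Closed) :
    Must e ↔ ∃ β < omega1, Lightning β e := by
  constructor
  · intro hm
    clear he
    induction hm with
    | @intro e h ih =>
      classical
      set f : ℕ → Ordinal.{0} :=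
        fun n => if hr : Red e (enum e n) then (ih _ hr).choose else 0 with hfdef
      have hf1 : ∀ n, f n < omega1 := by
        intro n
        simp only [hfdef]
        split
        · exact (ih _ ‹_›).choose_spec.1
        · exact omega1_pos
      have hL : ∀ n (hr : Red e (enum e n)), Lightning (f n) (enum e n) := by
        intro n hr
        simp only [hfdef]
        rw [dif_pos hr]
        exact (ih _ hr).choose_spec.2
      refine ⟨iSup (fun n => f n + 1), ?_, ?_⟩
      · refine Cardinal.iSup_lt_ord_of_isRegular Cardinal.isRegular_aleph_one
          (by simpa using Cardinal.aleph0_lt_aleph_one) (fun n => ?_)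
        have := omega1_isLimit.succ_lt (hf1 n)
        simpa [omega1, Order.succ_eq_add_one] using this
      · rw [lightning_iff]
        intro e' hr
        obtain ⟨l, hs⟩ := hr
        obtain ⟨n, hn⟩ := enum_complete hs
        refine ⟨f n, ?_, ?_⟩
        · exact lt_of_lt_of_le (Order.lt_add_one_iff.2 le_rfl)
            (Ordinal.le_iSup (fun n => f n + 1) n)
        · subst hn
          exact hL n ⟨l, hs⟩
  · rintro ⟨β, _, hl⟩
    exact lightning_must β e hl


end CountChoice
end

section
/- Substitution lemma for the may logical relation: if Δ,α ⊢ τ and Δ ⊢ τ' are well-formed types (Δ = α⃗), then for all closed types τ⃗,τ⃗' and all r⃗ ∈ VRel_ω(τ⃗,τ⃗'), ⟦τ[τ'/α]⟧(r⃗) = ⟦τ⟧(r⃗, ⟦τ'⟧(r⃗)). -/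
set_option maxHeartbeats 1000000

namespace CountChoice

theorem liftR_comp (f g : ℕ → ℕ) : liftR (g ∘ f) = liftR g ∘ liftR f := by
  funext i; cases i <;> rfl

theorem Ty.rename_comp (τ : Ty) : ∀ f g, (τ.rename f).rename g = τ.rename (g ∘ f) := by
  induction τ <;> intro f g <;> simp [Ty.rename, liftR_comp, *]

theorem liftS_liftR (σ : ℕ → Ty) (f : ℕ → ℕ) : liftS (σ ∘ f) = liftS σ ∘ liftR f := by
  funext i; cases i <;> rfl

theorem Ty.rename_subst (τ : Ty) : ∀ (f : ℕ → ℕ) (σ : ℕ → Ty),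
    (τ.rename f).subst σ = τ.subst (σ ∘ f) := by
  induction τ <;> intro f σ <;> simp [Ty.rename, Ty.subst, liftS_liftR, *]

theorem liftS_rename (σ : ℕ → Ty) (f : ℕ → ℕ) :
    liftS (fun i => (σ i).rename f) = fun i => (liftS σ i).rename (liftR f) := by
  funext i; cases i with
  | zero => rfl
  | succ i =>
    show ((σ i).rename f).rename Nat.succ = ((σ i).rename Nat.succ).rename (liftR f)
    rw [Ty.rename_comp, Ty.rename_comp]; rfl

theorem Ty.subst_rename (τ : Ty) : ∀ (σ : ℕ → Ty) (f : ℕ → ℕ),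
    (τ.subst σ).rename f = τ.subst (fun i => (σ i).rename f) := by
  induction τ <;> intro σ f <;> simp [Ty.rename, Ty.subst, liftS_rename, *]

theorem liftS_comp (σ δ : ℕ → Ty) :
    liftS (fun i => (σ i).subst δ) = fun i => (liftS σ i).subst (liftS δ) := by
  funext i; cases i with
  | zero => rfl
  | succ i =>
    show ((σ i).subst δ).rename Nat.succ = ((σ i).rename Nat.succ).subst (liftS δ)
    rw [Ty.subst_rename, Ty.rename_subst]; rfl

theorem Ty.subst_comp (τ : Ty) : ∀ (σ δ : ℕ → Ty),
    (τ.subst σ).subst δ = τ.subst (fun i => (σ i).subst δ) := by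
  induction τ <;> intro σ δ <;> simp [Ty.subst, liftS_comp, *]

/-- The body functional of the `mu` case of `interpMay`. -/
def muBody (m : ℕ) (ts : Fin m → Ty) (δ δ' : ℕ → Ty) (ρ : ℕ → SIRel)
    (n : ℕ) (ih : ∀ i, i < n → Tm → Tm → Prop) : Tm → Tm → Prop :=
  fun v v' =>
    ∃ j, ∃ h : j < m, ∃ u u',
      v = .inj j u ∧ v' = .inj j u' ∧ IsVal u ∧ IsVal u' ∧
      HasTy 0 [] u (Ty.subst (consTy ((Ty.mu m ts).subst δ) δ) (ts ⟨j, h⟩)) ∧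
      HasTy 0 [] u' (Ty.subst (consTy ((Ty.mu m ts).subst δ') δ') (ts ⟨j, h⟩)) ∧
      ∀ k, k < n →
        interpMay (ts ⟨j, h⟩)
          (consTy ((Ty.mu m ts).subst δ) δ)
          (consTy ((Ty.mu m ts).subst δ') δ')
          (consRel (fun i u₁ u₂ => ∃ hi : i < n, ih i hi u₁ u₂) ρ) k u u'

theorem interpMay_mu_def (m : ℕ) (ts : Fin m → Ty) (δ δ' : ℕ → Ty) (ρ : ℕ → SIRel)
    (n : ℕ) :
    interpMay (.mu m ts) δ δ' ρ n =
      Nat.strongRecOn (motive := fun _ => Tm → Tm → Prop) n (muBody m ts δ δ' ρ) := rfl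

theorem interpMay_mu (m : ℕ) (ts : Fin m → Ty) (δ δ' : ℕ → Ty) (ρ : ℕ → SIRel)
    (n : ℕ) :
    interpMay (.mu m ts) δ δ' ρ n =
      muBody m ts δ δ' ρ n (fun i _ => interpMay (.mu m ts) δ δ' ρ i) := by
  rw [interpMay_mu_def]
  show Nat.lt_wfRel.wf.fix _ n = _
  rw [WellFounded.fix_eq]
  rfl

theorem consTy_liftR (σ : Ty) (δ : ℕ → Ty) (f : ℕ → ℕ) :
    (fun i => consTy σ δ (liftR f i)) = consTy σ (fun i => δ (f i)) := by
  funext i; cases i <;> rfl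

theorem consRel_liftR (r : SIRel) (ρ : ℕ → SIRel) (f : ℕ → ℕ) :
    (fun i => consRel r ρ (liftR f i)) = consRel r (fun i => ρ (f i)) := by
  funext i; cases i <;> rfl

theorem interpMay_rename (τ : Ty) : ∀ (f : ℕ → ℕ) (δ δ' : ℕ → Ty) (ρ : ℕ → SIRel),
    interpMay (τ.rename f) δ δ' ρ =
      interpMay τ (fun i => δ (f i)) (fun i => δ' (f i)) (fun i => ρ (f i)) := by
  induction τ with
  | var i => intro f δ δ' ρ; rfl
  | unit => intro f δ δ' ρ; rfl
  | prod a b iha ihb =>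
    intro f δ δ' ρ
    simp only [Ty.rename, interpMay, iha, ihb]
    rfl
  | arrow a b iha ihb =>
    intro f δ δ' ρ
    have h1 : ∀ g : ℕ → Ty, (Ty.arrow (a.rename f) (b.rename f)).subst g
        = (Ty.arrow a b).subst (fun i => g (f i)) := by
      intro g
      rw [show Ty.arrow (a.rename f) (b.rename f) = (Ty.arrow a b).rename f from rfl,
        Ty.rename_subst, Function.comp_def]
    simp only [Ty.rename, interpMay, iha, ihb, h1]
    rfl
  | all a iha =>
    intro f δ δ' ρ
    have h1 : ∀ g : ℕ → Ty, (Ty.all (a.rename (liftR f))).subst g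
        = (Ty.all a).subst (fun i => g (f i)) := by
      intro g
      rw [show Ty.all (a.rename (liftR f)) = (Ty.all a).rename f from rfl,
        Ty.rename_subst, Function.comp_def]
    have h2 : ∀ (σ σ' : Ty) (r : SIRel),
        interpMay (a.rename (liftR f)) (consTy σ δ) (consTy σ' δ') (consRel r ρ)
          = interpMay a (consTy σ (fun i => δ (f i))) (consTy σ' (fun i => δ' (f i)))
              (consRel r (fun i => ρ (f i))) := by
      intro σ σ' r
      rw [iha (liftR f), consTy_liftR, consTy_liftR, consRel_liftR]
    simp only [Ty.rename, interpMay, h1, h2]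
    rfl
  | mu m ts ih =>
    intro f δ δ' ρ
    simp only [Ty.rename]
    funext n
    induction n using Nat.strongRecOn with
    | _ n IH =>
      rw [interpMay_mu, interpMay_mu]
      have h1 : ∀ g : ℕ → Ty,
          (Ty.mu m (fun j => (ts j).rename (liftR f))).subst g
            = (Ty.mu m ts).subst (fun i => g (f i)) := by
        intro g
        rw [show Ty.mu m (fun j => (ts j).rename (liftR f)) = (Ty.mu m ts).rename f from rfl,
          Ty.rename_subst, Function.comp_def]
      have h2 : ∀ (jj : Fin m) (g : ℕ → Ty) (M : Ty),
          Ty.subst (consTy M g) ((ts jj).rename (liftR f))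
            = Ty.subst (consTy M (fun i => g (f i))) (ts jj) := by
        intro jj g M
        rw [Ty.rename_subst, Function.comp_def, consTy_liftR]
      have h3 : ∀ (jj : Fin m) (M M' : Ty) (s : SIRel),
          interpMay ((ts jj).rename (liftR f)) (consTy M δ) (consTy M' δ') (consRel s ρ)
            = interpMay (ts jj) (consTy M (fun i => δ (f i))) (consTy M' (fun i => δ' (f i)))
                (consRel s (fun i => ρ (f i))) := by
        intro jj M M' s
        rw [ih jj (liftR f), consTy_liftR, consTy_liftR, consRel_liftR]
      have hs : (fun i u₁ u₂ => ∃ _ : i < n,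
            interpMay (.mu m (fun j => (ts j).rename (liftR f))) δ δ' ρ i u₁ u₂)
          = (fun i u₁ u₂ => ∃ _ : i < n,
            interpMay (.mu m ts) (fun i => δ (f i)) (fun i => δ' (f i))
              (fun i => ρ (f i)) i u₁ u₂) := by
        funext i u₁ u₂
        apply propext
        constructor
        · rintro ⟨hi, h⟩; exact ⟨hi, by rwa [IH i hi] at h⟩
        · rintro ⟨hi, h⟩; exact ⟨hi, by rwa [IH i hi]⟩
      unfold muBody
      unfold SIRel at h3
      simp only [h1, h2, h3, hs]

theorem liftS_subst_consTy (σ : ℕ → Ty) (s : Ty) (g : ℕ → Ty) :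
    (fun i => (liftS σ i).subst (consTy s g)) = consTy s (fun i => (σ i).subst g) := by
  funext i; cases i with
  | zero => rfl
  | succ i =>
    show ((σ i).rename Nat.succ).subst (consTy s g) = (σ i).subst g
    rw [Ty.rename_subst]
    congr 1

theorem liftS_interp_consRel (σ : ℕ → Ty) (s s' : Ty) (δ δ' : ℕ → Ty)
    (r : SIRel) (ρ : ℕ → SIRel) :
    (fun i => interpMay (liftS σ i) (consTy s δ) (consTy s' δ') (consRel r ρ))
      = consRel r (fun i => interpMay (σ i) δ δ' ρ) := by
  funext i; cases i with
  | zero => rfl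
  | succ i =>
    show interpMay ((σ i).rename Nat.succ) (consTy s δ) (consTy s' δ') (consRel r ρ)
      = consRel r (fun i => interpMay (σ i) δ δ' ρ) (i + 1)
    rw [interpMay_rename]
    rfl

theorem interpMay_subst_gen (τ : Ty) : ∀ (σ : ℕ → Ty) (δ δ' : ℕ → Ty) (ρ : ℕ → SIRel),
    interpMay (τ.subst σ) δ δ' ρ =
      interpMay τ (fun i => (σ i).subst δ) (fun i => (σ i).subst δ')
        (fun i => interpMay (σ i) δ δ' ρ) := by
  induction τ with
  | var i => intro σ δ δ' ρ; rfl
  | unit => intro σ δ δ' ρ; rfl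
  | prod a b iha ihb =>
    intro σ δ δ' ρ
    simp only [Ty.subst, interpMay, iha, ihb]
    rfl
  | arrow a b iha ihb =>
    intro σ δ δ' ρ
    simp only [Ty.subst, interpMay, iha, ihb, Ty.subst_comp]
    rfl
  | all a iha =>
    intro σ δ δ' ρ
    have h2 : ∀ (s s' : Ty) (r : SIRel),
        interpMay (a.subst (liftS σ)) (consTy s δ) (consTy s' δ') (consRel r ρ)
          = interpMay a (consTy s (fun i => (σ i).subst δ))
              (consTy s' (fun i => (σ i).subst δ'))
              (consRel r (fun i => interpMay (σ i) δ δ' ρ)) := by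
      intro s s' r
      rw [iha (liftS σ), liftS_subst_consTy, liftS_subst_consTy, liftS_interp_consRel]
    simp only [Ty.subst, interpMay, h2, Ty.subst_comp, ← liftS_comp]
    rfl
  | mu m ts ih =>
    intro σ δ δ' ρ
    simp only [Ty.subst]
    funext n
    induction n using Nat.strongRecOn with
    | _ n IH =>
      rw [interpMay_mu, interpMay_mu]
      have h1 : ∀ g : ℕ → Ty,
          (Ty.mu m (fun j => (ts j).subst (liftS σ))).subst g
            = (Ty.mu m ts).subst (fun i => (σ i).subst g) := by
        intro g
        rw [show Ty.mu m (fun j => (ts j).subst (liftS σ)) = (Ty.mu m ts).subst σ from rfl,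
          Ty.subst_comp]
      have h2 : ∀ (jj : Fin m) (g : ℕ → Ty) (M : Ty),
          Ty.subst (consTy M g) ((ts jj).subst (liftS σ))
            = Ty.subst (consTy M (fun i => (σ i).subst g)) (ts jj) := by
        intro jj g M
        rw [Ty.subst_comp, liftS_subst_consTy]
      have h3 : ∀ (jj : Fin m) (M M' : Ty) (s : SIRel),
          interpMay ((ts jj).subst (liftS σ)) (consTy M δ) (consTy M' δ') (consRel s ρ)
            = interpMay (ts jj) (consTy M (fun i => (σ i).subst δ))
                (consTy M' (fun i => (σ i).subst δ'))
                (consRel s (fun i => interpMay (σ i) δ δ' ρ)) := by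
        intro jj M M' s
        rw [ih jj (liftS σ), liftS_subst_consTy, liftS_subst_consTy, liftS_interp_consRel]
      have hs : (fun i u₁ u₂ => ∃ _ : i < n,
            interpMay (.mu m (fun j => (ts j).subst (liftS σ))) δ δ' ρ i u₁ u₂)
          = (fun i u₁ u₂ => ∃ _ : i < n,
            interpMay (.mu m ts) (fun i => (σ i).subst δ) (fun i => (σ i).subst δ')
              (fun i => interpMay (σ i) δ δ' ρ) i u₁ u₂) := by
        funext i u₁ u₂
        apply propext
        constructor
        · rintro ⟨hi, h⟩; exact ⟨hi, by rwa [IH i hi] at h⟩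
        · rintro ⟨hi, h⟩; exact ⟨hi, by rwa [IH i hi]⟩
      unfold muBody
      unfold SIRel at h3
      simp only [h1, h2, h3, hs]

/-- **Substitution lemma** (Lemma 4.1) for the may logical relation:
`⟦τ[τ'/α]⟧(r⃗) = ⟦τ⟧(r⃗, ⟦τ'⟧(r⃗))`, where `α` is the innermost type
variable of `Δ,α ⊢ τ`. -/
theorem interpMay_subst (Δ : ℕ) (τ τ' : Ty) (hτ : Ty.Wf (Δ + 1) τ)
    (hτ' : Ty.Wf Δ τ') (δ δ' : ℕ → Ty) (hδ : TySubstOK Δ δ) (hδ' : TySubstOK Δ δ')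
    (ρ : ℕ → SIRel) (hρ : ∀ i < Δ, IsVRel (δ i) (δ' i) (ρ i)) :
    interpMay (Ty.subst1 τ' τ) δ δ' ρ =
      interpMay τ (consTy (τ'.subst δ) δ) (consTy (τ'.subst δ') δ')
        (consRel (interpMay τ' δ δ' ρ) ρ) := by
  rw [Ty.subst1, interpMay_subst_gen,
    show (fun i => (consTy τ' Ty.var i).subst δ) = consTy (τ'.subst δ) δ by
      funext i; cases i <;> rfl,
    show (fun i => (consTy τ' Ty.var i).subst δ') = consTy (τ'.subst δ') δ' by
      funext i; cases i <;> rfl,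
    show (fun i => interpMay (consTy τ' Ty.var i) δ δ' ρ) = consRel (interpMay τ' δ δ' ρ) ρ by
      funext i; cases i <;> rfl]

end CountChoice
end

section
/- Context composition: for the may logical relation, if (v,v') ∈ (⟦τ₁→τ₂⟧r⃗)ₙ and (E,E') ∈ ((⟦τ₂⟧r⃗)⊤)ₙ, then (E[v []], E'[v' []]) ∈ ((⟦τ₁⟧r⃗)⊤)ₙ. -/
set_option maxHeartbeats 1000000

namespace CountChoice

/-! ### Auxiliary lemmas for context composition -/

lemma val_no_step {w : Tm} {l w'} (h : IsVal w) : ¬ Step w l w' := by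
  intro hs; cases h <;> cases hs

lemma app_not_val {a b : Tm} : ¬ IsVal (.app a b) := by intro h; cases h

lemma plug_val {E : List Tm} {X : Tm} (h : IsVal (plug E X)) :
    E = [] ∧ IsVal X := by
  cases E with
  | nil => exact ⟨rfl, h⟩
  | cons w E' => exact absurd h app_not_val

lemma plug_append (E : List Tm) (v u : Tm) :
    plug (E ++ [v]) u = plug E (.app v u) := by
  simp [plug, List.foldr_append]

lemma step_plug_vals {E : List Tm} (hE : ∀ w ∈ E, IsVal w) {X l X'}
    (h : Step X l X') : Step (plug E X) l (plug E X') := by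
  induction E with
  | nil => exact h
  | cons w E' ih =>
      exact Step.appArg (hE w (by simp)) (ih (fun w hw => hE w (by simp [hw])))

lemma step_plug_allvals {E : List Tm} {X l Y} (h : Step (plug E X) l Y) :
    ∀ w ∈ E, IsVal w := by
  induction E generalizing Y with
  | nil => simp
  | cons w E' ih =>
      cases h with
      | beta hval =>
          rcases plug_val hval with ⟨hE', hX⟩
          subst hE'
          intro x hx
          rcases List.mem_cons.mp hx with h | h
          · subst h; exact IsVal.lam
          · simp at h
      | appArg hw hs =>
          intro x hx
          rcases List.mem_cons.mp hx with h | h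
          · subst h; exact hw
          · exact ih hs x h

lemma step_plug_inv {E : List Tm} {X l Y} (hX : ¬ IsVal X)
    (h : Step (plug E X) l Y) : ∃ X', Step X l X' ∧ Y = plug E X' := by
  induction E generalizing Y with
  | nil => exact ⟨Y, h, rfl⟩
  | cons w E' ih =>
      cases h with
      | beta hval => exact absurd (plug_val hval).2 hX
      | appArg hw hs =>
          rcases ih hs with ⟨X', h1, h2⟩
          exact ⟨X', h1, by simp [plug, h2]⟩

lemma beta_inv {e u l X'} (hu : IsVal u)
    (h : Step (.app (.lam e) u) l X') : l = .beta ∧ X' = subst1 u e := by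
  cases h with
  | beta _ => exact ⟨rfl, rfl⟩
  | appArg _ hs => exact absurd hs (val_no_step hu)

lemma mayConvN_beta_inv {E : List Tm} {e u j} (hu : IsVal u)
    (h : MayConvN (plug E (.app (.lam e) u)) j) :
    MayConvN (plug E (subst1 u e)) j := by
  rcases h with ⟨m, hm, V, hsteps, hV⟩
  cases hsteps with
  | refl => exact absurd (plug_val hV).2 app_not_val
  | unfold h1 h2 =>
      rcases step_plug_inv app_not_val h1 with ⟨X', hs, _⟩
      exact absurd (beta_inv hu hs).1 (by intro h; cases h)
  | other hne h1 h2 =>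
      rcases step_plug_inv app_not_val h1 with ⟨X', hs, hY⟩
      rcases beta_inv hu hs with ⟨_, hX'⟩
      subst hX'; subst hY
      exact ⟨m, hm, V, h2, hV⟩

lemma mayConv_beta {E : List Tm} {e u} (hu : IsVal u)
    (h : MayConv (plug E (subst1 u e))) :
    MayConv (plug E (.app (.lam e) u)) := by
  rcases h with ⟨m, V, hsteps, hV⟩
  have hEvals : ∀ w ∈ E, IsVal w := by
    cases hsteps with
    | refl =>
        rcases plug_val hV with ⟨hE, _⟩
        subst hE; simp
    | unfold h1 _ => exact step_plug_allvals h1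
    | other _ h1 _ => exact step_plug_allvals h1
  refine ⟨m, V, StepsU.other (by intro h; cases h)
    (step_plug_vals hEvals (Step.beta hu)) hsteps, hV⟩

lemma interp_vals {τ : Ty} : ∀ {Δ : ℕ} {δ δ' : ℕ → Ty} {ρ : ℕ → SIRel},
    Ty.Wf Δ τ → (∀ i < Δ, IsVRel (δ i) (δ' i) (ρ i)) →
    ∀ {n u u'}, interpMay τ δ δ' ρ n u u' → IsVal u ∧ IsVal u' := by
  induction τ with
  | var i =>
      intro Δ δ δ' ρ hwf hρ n u u' h
      have := ((hρ i hwf).1 n u u' h)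
      exact ⟨this.1.1, this.2.1⟩
  | unit =>
      intro Δ δ δ' ρ hwf hρ n u u' h
      rcases h with ⟨h1, h2⟩; subst h1; subst h2
      exact ⟨IsVal.unit, IsVal.unit⟩
  | prod τ₁ τ₂ ih1 ih2 =>
      intro Δ δ δ' ρ hwf hρ n u u' h
      rcases h with ⟨v₁, v₂, v₁', v₂', h1, h2, h3, h4⟩
      subst h1; subst h2
      rcases ih1 hwf.1 hρ h3 with ⟨a1, a2⟩
      rcases ih2 hwf.2 hρ h4 with ⟨b1, b2⟩
      exact ⟨IsVal.pair a1 b1, IsVal.pair a2 b2⟩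
  | arrow τ₁ τ₂ ih1 ih2 =>
      intro Δ δ δ' ρ hwf hρ n u u' h
      rcases h with ⟨e, e', h1, h2, _⟩
      subst h1; subst h2
      exact ⟨IsVal.lam, IsVal.lam⟩
  | all τ ih =>
      intro Δ δ δ' ρ hwf hρ n u u' h
      rcases h with ⟨e, e', h1, h2, _⟩
      subst h1; subst h2
      exact ⟨IsVal.tlam, IsVal.tlam⟩
  | mu m ts ih =>
      intro Δ δ δ' ρ hwf hρ n u u' h
      simp only [interpMay] at h
      rw [Nat.strongRecOn_eq] at h
      rcases h with ⟨j, hj, w, w', h1, h2, hw, hw', _⟩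
      subst h1; subst h2
      exact ⟨IsVal.inj hw, IsVal.inj hw'⟩

/-- **Context composition** (Lemma 4.4): if `(v,v') ∈ ⟦τ₁→τ₂⟧(r⃗)ₙ` and
`(E,E') ∈ (⟦τ₂⟧(r⃗)⊤)ₙ` then `(E[v []], E'[v' []]) ∈ (⟦τ₁⟧(r⃗)⊤)ₙ`.
(The context `E[v []]` is represented by the list `E ++ [v]`.) -/
theorem context_composition (Δ : ℕ) (τ₁ τ₂ : Ty) (hτ₁ : Ty.Wf Δ τ₁)
    (hτ₂ : Ty.Wf Δ τ₂) (δ δ' : ℕ → Ty) (hδ : TySubstOK Δ δ) (hδ' : TySubstOK Δ δ')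
    (ρ : ℕ → SIRel) (hρ : ∀ i < Δ, IsVRel (δ i) (δ' i) (ρ i))
    (n : ℕ) (v v' : Tm) (E E' : List Tm)
    (hv : interpMay (.arrow τ₁ τ₂) δ δ' ρ n v v')
    (hE : sTopMay (interpMay τ₂ δ δ' ρ) n E E') :
    sTopMay (interpMay τ₁ δ δ' ρ) n (E ++ [v]) (E' ++ [v']) := by
  intro j hj u u' hu hconv
  rcases hv with ⟨e, e', hve, hve', _, _, hfun⟩
  subst hve; subst hve'
  rcases interp_vals hτ₁ hρ hu with ⟨huv, huv'⟩
  rw [plug_append] at hconv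
  have hconv' : MayConvN (plug E (subst1 u e)) j := mayConvN_beta_inv huv hconv
  have hEj : sTopMay (interpMay τ₂ δ δ' ρ) j E E' :=
    fun i hi => hE i (le_trans hi hj)
  have := hfun j hj u u' hu j le_rfl E E' hEj hconv'
  rw [plug_append]
  exact mayConv_beta huv' this

end CountChoice
end
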